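/- The only squares (factors of the form zz with z nonempty) occurring in the run-length sequence of any infinite paperfolding sequence are 22, 123123, and 321321. -/

import Mathlib

/-- Paperfolding word; instructions are given with the most recent (last) instruction first. -/
def foldAux : List ℤ → List ℤ
  | [] => []
  | a :: f => foldAux f ++ a :: (foldAux f).reverse.map (fun x => -x)

/-- `paper f` is the finite paperfolding word `P_f` for instructions `f = [f_0, f_1, …]`,
satisfying `P_ε = ε` and `P_{f·a} = P_f · a · (-P_f^R)`. -/
def paper (f : List ℤ) : List ℤ := foldAux f.reverse

/-- The sequence of lengths of the maximal runs (maximal blocks of equal symbols) of `w`. -/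
def runLengths (w : List ℤ) : List ℕ := (w.splitBy (fun a b => a == b)).map List.length

/-- `p` (indexed from 1) is the infinite paperfolding sequence with instructions `f`,
i.e. every finite paperfolding word of a prefix of `f` is a prefix of `p`. -/
def IsLimit (f : ℕ → ℤ) (p : ℕ → ℤ) : Prop :=
  ∀ m k, k < (paper ((List.range m).map f)).length →
    p (k + 1) = (paper ((List.range m).map f)).getD k 0

/-- `E` enumerates, in increasing order (`E 1 < E 2 < ⋯`, with the convention `E 0 = 0`),
the ending positions of the maximal runs of the sequence `p` (indexed from 1):
position `m ≥ 1` ends a run iff `p m ≠ p (m+1)`. -/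
def IsRunEnds (p : ℕ → ℤ) (E : ℕ → ℕ) : Prop :=
  E 0 = 0 ∧ StrictMono E ∧ ∀ m, 1 ≤ m → ((∃ n, 1 ≤ n ∧ E n = m) ↔ p m ≠ p (m + 1))

def sig : (ℕ → ℤ) → ℕ → ℤ
  | _, 0 => 0
  | f, (n+1) =>
    if (n+1) % 2 = 0 then sig (fun i => f (i+1)) ((n+1)/2)
    else if (n+1) % 4 = 1 then f 0 else -f 0
  termination_by _ n => n
  decreasing_by simp_wf; omega

lemma sig_zero (f : ℕ → ℤ) : sig f 0 = 0 := by simp [sig]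

lemma sig_succ (f : ℕ → ℤ) (n : ℕ) : sig f (n+1) =
    if (n+1) % 2 = 0 then sig (fun i => f (i+1)) ((n+1)/2)
    else if (n+1) % 4 = 1 then f 0 else -f 0 := by rw [sig]

lemma sig_even (f : ℕ → ℤ) (n : ℕ) : sig f (2*n) = sig (fun i => f (i+1)) n := by
  cases n with
  | zero => simp [sig]
  | succ m =>
    rw [show 2*(m+1) = (2*m+1)+1 by ring, sig_succ, if_pos (by omega)]
    congr 1
    omega

lemma sig_odd1 (f : ℕ → ℤ) (n : ℕ) (h : n % 4 = 1) : sig f n = f 0 := by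
  obtain ⟨m, rfl⟩ : ∃ m, n = m + 1 := ⟨n - 1, by omega⟩
  rw [sig_succ, if_neg (by omega), if_pos h]

lemma sig_odd3 (f : ℕ → ℤ) (n : ℕ) (h : n % 4 = 3) : sig f n = -f 0 := by
  obtain ⟨m, rfl⟩ : ∃ m, n = m + 1 := ⟨n - 1, by omega⟩
  rw [sig_succ, if_neg (by omega), if_neg (by omega)]

lemma sig_pow1 : ∀ (a : ℕ) (f : ℕ → ℤ) (b : ℕ), sig f (2^a * (4*b+1)) = f a := by
  intro a
  induction a with
  | zero => intro f b; rw [pow_zero, one_mul, sig_odd1 f _ (by omega)]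
  | succ a ih =>
    intro f b
    rw [show 2^(a+1) * (4*b+1) = 2*(2^a*(4*b+1)) by ring, sig_even, ih]

lemma sig_pow3 : ∀ (a : ℕ) (f : ℕ → ℤ) (b : ℕ), sig f (2^a * (4*b+3)) = -f a := by
  intro a
  induction a with
  | zero => intro f b; rw [pow_zero, one_mul, sig_odd3 f _ (by omega)]
  | succ a ih =>
    intro f b
    rw [show 2^(a+1) * (4*b+3) = 2*(2^a*(4*b+3)) by ring, sig_even, ih]

lemma sig_pow (f : ℕ → ℤ) (a : ℕ) : sig f (2^a) = f a := by
  have := sig_pow1 a f 0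
  simpa using this

lemma sig_pm : ∀ (n : ℕ) (f : ℕ → ℤ), (∀ i, f i = -1 ∨ f i = 1) → 1 ≤ n →
    sig f n = 1 ∨ sig f n = -1 := by
  intro n
  induction n using Nat.strong_induction_on with
  | _ n ih =>
    intro f hf hn
    rcases Nat.even_or_odd n with ⟨v, hv⟩ | ⟨v, hv⟩
    · subst hv
      rw [show v + v = 2*v by ring, sig_even]
      exact ih v (by omega) _ (fun i => hf (i+1)) (by omega)
    · subst hv
      rcases Nat.lt_or_ge ((2*v+1) % 4) 2 with h | h
      · rw [sig_odd1 f _ (by omega)]; rcases hf 0 with h | h <;> simp [h]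
      · rw [sig_odd3 f _ (by omega)]; rcases hf 0 with h | h <;> simp [h]

lemma sig_mirror : ∀ (m : ℕ) (f : ℕ → ℤ) (x : ℕ), 1 ≤ x → x < 2^m →
    sig f (2^m + x) = - sig f (2^m - x) := by
  intro m
  induction m with
  | zero => intro f x h1 h2; omega
  | succ m ih =>
    intro f x h1 h2
    rcases Nat.even_or_odd x with ⟨y, hy⟩ | hodd
    · subst hy
      have hP : (1:ℕ) ≤ 2^m := Nat.one_le_two_pow
      have e1 : 2^(m+1) + (y+y) = 2*(2^m + y) := by rw [pow_succ]; ring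
      have e2 : 2^(m+1) - (y+y) = 2*(2^m - y) := by rw [pow_succ]; omega
      rw [e1, e2, sig_even, sig_even]
      exact ih _ y (by omega) (by rw [pow_succ] at h2; omega)
    · cases m with
      | zero =>
        have : x = 1 := by omega
        subst this
        rw [show 2^1 + 1 = 3 by norm_num, show 2^1 - 1 = 1 by norm_num,
          sig_odd3 f _ (by omega), sig_odd1 f _ (by omega)]
      | succ m =>
        have h4 : 2^(m+1+1) = 4 * 2^m := by ring
        obtain ⟨u, hu⟩ := hodd
        rcases Nat.lt_or_ge (x % 4) 2 with h | h
        · rw [sig_odd1 f _ (by omega), sig_odd3 f _ (by omega)]; ring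
        · rw [sig_odd3 f _ (by omega), sig_odd1 f _ (by omega)]

lemma foldAux_length : ∀ l : List ℤ, (foldAux l).length = 2^l.length - 1 := by
  intro l
  induction l with
  | nil => simp [foldAux]
  | cons a f ih =>
    have := Nat.one_le_two_pow (n := f.length)
    simp [foldAux, ih, List.length_append, pow_succ]
    omega

lemma paper_length (L : List ℤ) : (paper L).length = 2 ^ L.length - 1 := by
  rw [paper, foldAux_length, List.length_reverse]

lemma paper_snoc (L : List ℤ) (a : ℤ) :
    paper (L ++ [a]) = paper L ++ a :: ((paper L).reverse.map (fun x => -x)) := by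
  simp [paper, foldAux]

lemma paper_getD (f : ℕ → ℤ) : ∀ (m k : ℕ), k < 2^m - 1 →
    (paper ((List.range m).map f)).getD k 0 = sig f (k+1) := by
  intro m
  induction m with
  | zero => intro k hk; simp at hk
  | succ m ih =>
    intro k hk
    have hrange : (List.range (m+1)).map f = (List.range m).map f ++ [f m] := by
      rw [List.range_succ, List.map_append]; rfl
    have hlen : (paper ((List.range m).map f)).length = 2^m - 1 := by
      rw [paper_length, List.length_map, List.length_range]
    have h1 : (1:ℕ) ≤ 2^m := Nat.one_le_two_pow
    have hsz : 2^(m+1) = 2 * 2^m := by ring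
    rw [hrange, paper_snoc]
    rcases Nat.lt_trichotomy k (2^m - 1) with h | h | h
    · rw [List.getD_append _ _ _ _ (by omega), ih k h]
    · subst h
      have hbig : ((paper ((List.range m).map f)) ++ f m ::
          (paper ((List.range m).map f)).reverse.map (fun x => -x)).length = 2^(m+1) - 1 := by
        simp [hlen]; omega
      rw [List.getD_eq_getElem _ _ (by rw [hbig]; omega)]
      rw [List.getElem_append_right (by omega)]
      have hz : 2^m - 1 - (paper ((List.range m).map f)).length = 0 := by omega
      simp only [hz, List.getElem_cons_zero]
      rw [show 2^m - 1 + 1 = 2^m by omega, sig_pow]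
    · have hjlt : k - 2^m < 2^m - 1 := by omega
      have hbig : ((paper ((List.range m).map f)) ++ f m ::
          (paper ((List.range m).map f)).reverse.map (fun x => -x)).length = 2^(m+1) - 1 := by
        simp [hlen]; omega
      rw [List.getD_eq_getElem _ _ (by rw [hbig]; omega)]
      rw [List.getElem_append_right (by omega)]
      have hidx : k - (paper ((List.range m).map f)).length = (k - 2^m) + 1 := by omega
      simp only [hidx, List.getElem_cons_succ]
      rw [List.getElem_map, List.getElem_reverse]
      rw [show ((paper ((List.range m).map f))[(paper ((List.range m).map f)).length - 1 - (k - 2^m)]'(by omega))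
          = (paper ((List.range m).map f)).getD ((paper ((List.range m).map f)).length - 1 - (k - 2^m)) 0
        from (List.getD_eq_getElem _ _ (by omega)).symm]
      rw [show (paper ((List.range m).map f)).length - 1 - (k - 2^m) = 2^m - 2 - (k - 2^m) by omega]
      rw [ih _ (by omega)]
      rw [show 2^m - 2 - (k - 2^m) + 1 = 2^m - (k - 2^m + 1) by omega]
      rw [show k + 1 = 2^m + (k - 2^m + 1) by omega]
      rw [sig_mirror m f (k - 2^m + 1) (by omega) (by omega)]

def Ff (c : ℕ → Bool) : Prop :=
  ∃ g : ℕ → Bool, ∀ a b : ℕ, c (2^a * (4*b+1)) = g a ∧ c (2^a * (4*b+3)) = !g a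

lemma Ff.oddval {c : ℕ → Bool} (hc : Ff c) :
    ∃ g0 : Bool, ∀ w : ℕ, c (2*w+1) = (g0.xor (decide (w % 2 = 1))) := by
  obtain ⟨g, hg⟩ := hc
  refine ⟨g 0, fun w => ?_⟩
  rcases Nat.even_or_odd w with ⟨b, hb⟩ | ⟨b, hb⟩
  · have := (hg 0 b).1
    rw [show 2^0 * (4*b+1) = 2*w+1 by subst hb; ring] at this
    rw [this, show w % 2 = 0 by omega]
    simp
  · have := (hg 0 b).2
    rw [show 2^0 * (4*b+3) = 2*w+1 by subst hb; ring] at this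
    rw [this, show w % 2 = 1 by omega]
    cases g 0 <;> simp

lemma Ff.odd_ne {c : ℕ → Bool} (hc : Ff c) (u v : ℕ) (h : u % 2 ≠ v % 2) :
    c (2*u+1) = !c (2*v+1) := by
  obtain ⟨g0, hg⟩ := hc.oddval
  rw [hg u, hg v]
  rcases Nat.mod_two_eq_zero_or_one u with h1 | h1 <;>
    rcases Nat.mod_two_eq_zero_or_one v with h2 | h2 <;>
    simp [h1, h2] at h ⊢ <;> cases g0 <;> simp

lemma Ff.odd_eq {c : ℕ → Bool} (hc : Ff c) (u v : ℕ) (h : u % 2 = v % 2) :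
    c (2*u+1) = c (2*v+1) := by
  obtain ⟨g0, hg⟩ := hc.oddval
  rw [hg u, hg v, h]

lemma Ff.shift {c : ℕ → Bool} (hc : Ff c) : Ff (fun m => c (2*m)) := by
  obtain ⟨g, hg⟩ := hc
  refine ⟨fun a => g (a+1), fun a b => ?_⟩
  constructor
  · show c (2*(2^a*(4*b+1))) = g (a+1)
    rw [show 2*(2^a*(4*b+1)) = 2^(a+1)*(4*b+1) by ring]
    exact (hg (a+1) b).1
  · show c (2*(2^a*(4*b+3))) = !g (a+1)
    rw [show 2*(2^a*(4*b+3)) = 2^(a+1)*(4*b+3) by ring]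
    exact (hg (a+1) b).2

lemma keyS : ∀ k : ℕ, 1 ≤ k → ∀ c : ℕ → Bool, Ff c → ∀ j0 : ℕ,
    (∀ t, t < k → c (j0+t) = c (j0+k+t)) → k % 2 = 1 := by
  intro k
  induction k using Nat.strong_induction_on with
  | _ k ih =>
    intro hk c hc j0 hper
    by_contra hke
    obtain ⟨k', rfl⟩ : ∃ k', k = 2*k' := ⟨k/2, by omega⟩
    have hk' : 1 ≤ k' := by omega
    rcases Nat.mod_two_eq_zero_or_one k' with hpar | hpar
    · -- k' even : recurse on even positions
      have hc2 := hc.shift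
      rcases Nat.even_or_odd j0 with ⟨m0, hm0⟩ | ⟨m0, hm0⟩
      · have hper2 : ∀ t, t < k' → (fun m => c (2*m)) (m0+t) = (fun m => c (2*m)) (m0+k'+t) := by
          intro t ht
          have := hper (2*t) (by omega)
          simp only []
          rw [show 2*(m0+t) = j0 + 2*t by omega, show 2*(m0+k'+t) = j0 + 2*k' + 2*t by omega]
          exact this
        have := ih k' (by omega) hk' _ hc2 m0 hper2
        omega
      · have hper2 : ∀ t, t < k' → (fun m => c (2*m)) (m0+1+t) = (fun m => c (2*m)) (m0+1+k'+t) := by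
          intro t ht
          have := hper (2*t+1) (by omega)
          simp only []
          rw [show 2*(m0+1+t) = j0 + (2*t+1) by omega,
            show 2*(m0+1+k'+t) = j0 + 2*k' + (2*t+1) by omega]
          exact this
        have := ih k' (by omega) hk' _ hc2 (m0+1) hper2
        omega
    · -- k' odd : alternation contradiction at an odd position
      rcases Nat.even_or_odd j0 with ⟨m0, hm0⟩ | ⟨m0, hm0⟩
      · have h1 := hper 1 (by omega)
        rw [show j0 + 1 = 2*m0+1 by omega, show j0 + 2*k' + 1 = 2*(m0+k')+1 by omega] at h1
        have h2 := hc.odd_ne m0 (m0+k') (by omega)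
        rw [h1] at h2
        simp at h2
      · have h1 := hper 0 (by omega)
        rw [show j0 + 0 = 2*m0+1 by omega, show j0 + 2*k' + 0 = 2*(m0+k')+1 by omega] at h1
        have h2 := hc.odd_ne m0 (m0+k') (by omega)
        rw [h1] at h2
        simp at h2

lemma keyL : ∀ n : ℕ, 1 ≤ n → ∀ c : ℕ → Bool, Ff c → ∀ j0 : ℕ,
    (∀ t, t ≤ n → c (j0+t) = c (j0+n+t)) →
    n = 1 ∨ (n = 3 ∧ c (j0+1) = !c j0 ∧ c (j0+2) = !c j0 ∧ c (j0+3) = c j0) := by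
  intro n
  induction n using Nat.strong_induction_on with
  | _ n ih =>
    intro hn c hc j0 hper
    rcases Nat.even_or_odd n with ⟨k, hk⟩ | ⟨h, hh⟩
    · -- n even, n = 2k : contradiction
      exfalso
      have hk1 : 1 ≤ k := by omega
      rcases Nat.mod_two_eq_zero_or_one k with hpar | hpar
      · rcases Nat.even_or_odd j0 with ⟨m0, hm0⟩ | ⟨m0, hm0⟩
        · have hper2 : ∀ t, t ≤ k → (fun m => c (2*m)) (m0+t) = (fun m => c (2*m)) (m0+k+t) := by
            intro t ht
            have := hper (2*t) (by omega)
            simp only []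
            rw [show 2*(m0+t) = j0 + 2*t by omega, show 2*(m0+k+t) = j0 + n + 2*t by omega]
            exact this
          have := ih k (by omega) hk1 _ hc.shift m0 hper2
          omega
        · have hperS : ∀ t, t < k → (fun m => c (2*m)) (m0+1+t) = (fun m => c (2*m)) (m0+1+k+t) := by
            intro t ht
            have := hper (2*t+1) (by omega)
            simp only []
            rw [show 2*(m0+1+t) = j0 + (2*t+1) by omega,
              show 2*(m0+1+k+t) = j0 + n + (2*t+1) by omega]
            exact this
          have := keyS k hk1 _ hc.shift (m0+1) hperS
          omega
      · -- k odd : odd position alternation contradiction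
        rcases Nat.even_or_odd j0 with ⟨m0, hm0⟩ | ⟨m0, hm0⟩
        · have h1 := hper 1 (by omega)
          rw [show j0 + 1 = 2*m0+1 by omega, show j0 + n + 1 = 2*(m0+k)+1 by omega] at h1
          have h2 := hc.odd_ne m0 (m0+k) (by omega)
          rw [h1] at h2; simp at h2
        · have h1 := hper 0 (by omega)
          rw [show j0 + 0 = 2*m0+1 by omega, show j0 + n + 0 = 2*(m0+k)+1 by omega] at h1
          have h2 := hc.odd_ne m0 (m0+k) (by omega)
          rw [h1] at h2; simp at h2
    · -- n odd, n = 2h+1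
      rcases Nat.eq_or_lt_of_le hn with h1 | h1
      · exact Or.inl h1.symm
      -- h ≥ 1; first : j0 must be even
      rcases Nat.even_or_odd j0 with ⟨m0, hm0⟩ | ⟨u, hu⟩
      swap
      · exfalso
        have ht0 := hper 0 (by omega)
        have htn := hper n (by omega)
        simp only [Nat.add_zero] at ht0 htn
        have hchain : c j0 = c (j0 + n + n) := ht0.trans htn
        rw [show j0 + n + n = 2*(u+2*h+1)+1 by omega] at hchain
        rw [show j0 = 2*u+1 by omega] at hchain
        have h2 := hc.odd_ne u (u+2*h+1) (by omega)
        rw [hchain] at h2; simp at h2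
      rcases Nat.lt_or_ge h 2 with hh2 | hh2
      · -- h = 1, n = 3 : the pattern
        have hn3 : n = 3 := by omega
        subst hn3
        right
        have e1 : c (j0+1) = !c (j0+3) := by
          have := hc.odd_ne m0 (m0+1) (by omega)
          rw [show 2*m0+1 = j0+1 by omega, show 2*(m0+1)+1 = j0+3 by omega] at this
          exact this
        have e2 : c (j0+3) = c j0 := by
          have := hper 0 (by omega); simpa using this.symm
        have e3 : c (j0+2) = !c (j0+3) := by
          have h5 := hper 2 (by omega)
          rw [show j0 + 3 + 2 = j0 + 5 by omega] at h5
          have := hc.odd_ne (m0+2) (m0+1) (by omega)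
          rw [show 2*(m0+2)+1 = j0+5 by omega, show 2*(m0+1)+1 = j0+3 by omega] at this
          rw [h5, this]
        refine ⟨rfl, ?_, ?_, e2⟩
        · rw [e1, e2]
        · rw [e3, e2]
      · -- h ≥ 2 : contradiction
        exfalso
        have A : ∀ s, s ≤ h → c (2*(m0+s)) = c (2*(m0+s+h)+1) := by
          intro s hs
          have := hper (2*s) (by omega)
          rw [show j0 + 2*s = 2*(m0+s) by omega,
            show j0 + n + 2*s = 2*(m0+s+h)+1 by omega] at this
          exact this
        have B : ∀ s, s ≤ h → c (2*(m0+s)+1) = c (2*(m0+s+h+1)) := by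
          intro s hs
          have := hper (2*s+1) (by omega)
          rw [show j0 + (2*s+1) = 2*(m0+s)+1 by omega,
            show j0 + n + (2*s+1) = 2*(m0+s+h+1) by omega] at this
          exact this
        have shiftne : ∀ v w : ℕ, v % 2 ≠ w % 2 → c (2*(2*v+1)) = !c (2*(2*w+1)) := by
          intro v w hvw
          have := hc.shift.odd_ne v w hvw
          simpa using this
        rcases Nat.even_or_odd m0 with ⟨v, hv⟩ | ⟨v, hv⟩
        · -- m0 even
          rcases Nat.lt_or_ge h 3 with hh3 | hh3
          · -- h = 2 : use B at 0 and 2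
            have hB0 := B 0 (by omega)
            have hB2 := B 2 (by omega)
            have heq := hc.odd_eq m0 (m0+2) (by omega)
            rw [show m0 + 0 = m0 by omega] at hB0
            have cA : c (2*(m0+h+1)) = c (2*(m0+2+h+1)) := by
              rw [← hB0, ← hB2]
              exact heq
            have := shiftne (v+1) (v+2) (by omega)
            rw [show 2*(2*(v+1)+1) = 2*(m0+h+1) by omega,
              show 2*(2*(v+2)+1) = 2*(m0+2+h+1) by omega] at this
            rw [cA] at this; simp at this
          · -- h ≥ 3 : use A at 1 and 3
            have hA1 := A 1 (by omega)
            have hA3 := A 3 (by omega)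
            have heq := hc.odd_eq (m0+1+h) (m0+3+h) (by omega)
            rw [show m0+1+h = m0+1+h by rfl] at heq
            have cA : c (2*(m0+1)) = c (2*(m0+3)) := by
              rw [hA1, hA3]
              rw [show 2*(m0+1+h)+1 = 2*(m0+1+h)+1 by rfl]
              exact hc.odd_eq (m0+1+h) (m0+3+h) (by omega)
            have := shiftne v (v+1) (by omega)
            rw [show 2*(2*v+1) = 2*(m0+1) by omega,
              show 2*(2*(v+1)+1) = 2*(m0+3) by omega] at this
            rw [cA] at this; simp at this
        · -- m0 odd : use A at 0 and 2
          have hA0 := A 0 (by omega)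
          have hA2 := A 2 (by omega)
          rw [show m0 + 0 = m0 by omega] at hA0
          have cA : c (2*m0) = c (2*(m0+2)) := by
            rw [hA0, hA2]
            exact hc.odd_eq (m0+0+h) (m0+2+h) (by omega)
          have := shiftne v (v+1) (by omega)
          rw [show 2*(2*v+1) = 2*m0 by omega,
            show 2*(2*(v+1)+1) = 2*(m0+2) by omega] at this
          rw [cA] at this; simp at this

def cbf (f : ℕ → ℤ) (n : ℕ) : Bool :=
  decide (sig f (2*n) = (if n % 2 = 0 then f 0 else -f 0))

def cNf (f : ℕ → ℤ) (n : ℕ) : ℕ := if cbf f n then 1 else 0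

lemma cNf_le (f : ℕ → ℤ) (n : ℕ) : cNf f n ≤ 1 := by
  by_cases h : cbf f n <;> simp [cNf, h]

lemma cbf_zero (f : ℕ → ℤ) (hf : ∀ i, f i = -1 ∨ f i = 1) : cbf f 0 = false := by
  have : 2 * 0 = 0 := rfl
  rcases hf 0 with h | h <;> simp [cbf, this, sig_zero, h]

lemma negdec (x y : ℤ) (hx : x = -1 ∨ x = 1) (hy : y = -1 ∨ y = 1) :
    decide (-x = y) = !decide (x = y) := by
  rcases hx with rfl | rfl <;> rcases hy with rfl | rfl <;> decide

lemma Ff_cbf (f : ℕ → ℤ) (hf : ∀ i, f i = -1 ∨ f i = 1) : Ff (cbf f) := by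
  refine ⟨fun a => cbf f (2^a), fun a b => ?_⟩
  have hpow : ∀ x : ℕ, x % 2 = 1 → (2^a * (4*b+x)) % 2 = 2^a % 2 := by
    intro x hx
    rcases Nat.eq_zero_or_pos a with rfl | ha
    · norm_num; omega
    · obtain ⟨q, hq⟩ : 2 ∣ 2^a := dvd_pow_self 2 (by omega)
      rw [hq, show 2*q*(4*b+x) = 2*(q*(4*b+x)) by ring]
      simp [Nat.mul_mod_right]
  have hs1 : sig f (2*(2^a*(4*b+1))) = f (a+1) := by
    rw [show 2*(2^a*(4*b+1)) = 2^(a+1)*(4*b+1) by ring, sig_pow1]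
  have hs3 : sig f (2*(2^a*(4*b+3))) = -f (a+1) := by
    rw [show 2*(2^a*(4*b+3)) = 2^(a+1)*(4*b+3) by ring, sig_pow3]
  have hsp : sig f (2*2^a) = f (a+1) := by
    rw [show 2*2^a = 2^(a+1) by ring, sig_pow]
  constructor
  · simp only [cbf, hs1, hsp, hpow 1 (by omega)]
  · simp only [cbf, hs3, hsp, hpow 3 (by omega)]
    exact negdec _ _ (hf (a+1)) (by rcases hf 0 with h|h <;> rw [h] <;> split <;> simp)

lemma ne_iff_eq_neg (x s : ℤ) (hx : x = 1 ∨ x = -1) (hs : s = 1 ∨ s = -1) :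
    (x ≠ s ↔ x = -s) := by
  rcases hx with rfl | rfl <;> rcases hs with rfl | rfl <;> norm_num

lemma run_char (f : ℕ → ℤ) (hf : ∀ i, f i = -1 ∨ f i = 1) (m : ℕ) (hm : 1 ≤ m) :
    (sig f m ≠ sig f (m+1)) ↔ ∃ k, 1 ≤ k ∧ 2*k - cNf f k = m := by
  rcases Nat.even_or_odd m with ⟨v, hv⟩ | ⟨v, hv⟩
  · -- m even, m = 2v
    have hv1 : 1 ≤ v := by omega
    have e1 : sig f (m+1) = (if v % 2 = 0 then f 0 else -f 0) := by
      rcases Nat.mod_two_eq_zero_or_one v with h | h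
      · rw [if_pos h]; exact sig_odd1 f (m+1) (by omega)
      · rw [if_neg (by omega)]; exact sig_odd3 f (m+1) (by omega)
    have e0 : sig f (2*v) = sig f m := by rw [show 2*v = m by omega]
    constructor
    · intro hne
      refine ⟨v, hv1, ?_⟩
      have hfalse : cbf f v = false := by
        simp only [cbf, decide_eq_false_iff_not]
        rw [e0]
        exact fun h => hne (h.trans e1.symm)
      simp [cNf, hfalse]; omega
    · rintro ⟨k, hk1, hk2⟩
      cases hb : cbf f k with
      | true => exfalso; simp [cNf, hb] at hk2; omega
      | false =>
        simp [cNf, hb] at hk2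
        have hkv : k = v := by omega
        subst hkv
        simp only [cbf, decide_eq_false_iff_not] at hb
        rw [e0] at hb
        rw [e1]
        exact hb
  · -- m odd, m = 2v+1
    have e1 : sig f m = (if v % 2 = 0 then f 0 else -f 0) := by
      rcases Nat.mod_two_eq_zero_or_one v with h | h
      · rw [if_pos h]; exact sig_odd1 f m (by omega)
      · rw [if_neg (by omega)]; exact sig_odd3 f m (by omega)
    have e2 : sig f (m+1) = sig f (2*(v+1)) := by rw [show 2*(v+1) = m+1 by omega]
    have hSneg : (if (v+1) % 2 = 0 then f 0 else -f 0)
        = -(if v % 2 = 0 then f 0 else -f 0) := by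
      rcases Nat.mod_two_eq_zero_or_one v with h | h
      · rw [if_neg (show ¬(v+1) % 2 = 0 by omega), if_pos h]
      · rw [if_pos (show (v+1) % 2 = 0 by omega), if_neg (by omega), neg_neg]
    have hSpm : (if v % 2 = 0 then f 0 else -f 0) = 1 ∨ (if v % 2 = 0 then f 0 else -f 0) = -1 := by
      rcases hf 0 with h | h <;> rw [h] <;> split <;> simp
    have hxpm := sig_pm (2*(v+1)) f hf (by omega)
    have hmain : (sig f m ≠ sig f (m+1)) ↔ cbf f (v+1) = true := by
      rw [e1, e2, cbf, decide_eq_true_iff, hSneg]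
      rw [ne_comm]
      exact ne_iff_eq_neg _ _ hxpm hSpm
    rw [hmain]
    constructor
    · intro htrue
      refine ⟨v+1, by omega, ?_⟩
      simp [cNf, htrue]; omega
    · rintro ⟨k, hk1, hk2⟩
      cases hb : cbf f k with
      | false => exfalso; simp [cNf, hb] at hk2; omega
      | true =>
        simp [cNf, hb] at hk2
        have : k = v + 1 := by omega
        subst this
        exact hb

lemma mono_range_eq (E e : ℕ → ℕ) (hE : StrictMono E) (he : StrictMono e) (h0 : E 0 = e 0)
    (hiff : ∀ m, (∃ k, 1 ≤ k ∧ E k = m) ↔ ∃ k, 1 ≤ k ∧ e k = m) : ∀ n, E n = e n := by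
  intro n
  induction n using Nat.strong_induction_on with
  | _ n IH =>
    rcases Nat.eq_zero_or_pos n with rfl | hn
    · exact h0
    obtain ⟨j, hj1, hj2⟩ := (hiff (E n)).1 ⟨n, hn, rfl⟩
    obtain ⟨i, hi1, hi2⟩ := (hiff (e n)).2 ⟨n, hn, rfl⟩
    rcases lt_trichotomy (E n) (e n) with h | h | h
    · exfalso
      have hjn : j < n := he.lt_iff_lt.mp (by omega)
      have := IH j hjn
      have : E j = E n := by omega
      have := hE.injective this
      omega
    · exact h
    · exfalso
      have hin : i < n := hE.lt_iff_lt.mp (by omega)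
      have := IH i hin
      have : e i = e n := by omega
      have := he.injective this
      omega

theorem runSeq_squares (f p : ℕ → ℤ) (E : ℕ → ℕ)
    (hf : ∀ n, f n = -1 ∨ f n = 1) (hp : IsLimit f p) (hE : IsRunEnds p E)
    (R : ℕ → ℕ) (hR : ∀ k, R k = E k - E (k - 1)) :
    ∀ i n : ℕ, 1 ≤ i → 1 ≤ n → (∀ t < n, R (i + t) = R (i + n + t)) →
      (n = 1 ∧ R i = 2) ∨
      (n = 3 ∧ R i = 1 ∧ R (i + 1) = 2 ∧ R (i + 2) = 3) ∨
      (n = 3 ∧ R i = 3 ∧ R (i + 1) = 2 ∧ R (i + 2) = 1) := by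
  intro i n hi hn hsq
  have hpe : ∀ m, 1 ≤ m → p m = sig f m := by
    intro m hm
    obtain ⟨k, rfl⟩ : ∃ k, m = k + 1 := ⟨m-1, by omega⟩
    have hlen : (paper ((List.range (k+1)).map f)).length = 2^(k+1) - 1 := by
      rw [paper_length]; simp
    have hlt : k < 2^(k+1) - 1 := by
      have h2 : k + 1 < 2^(k+1) := Nat.lt_two_pow_self (n := k+1)
      omega
    have h2 := hp (k+1) k (by omega)
    rw [h2, paper_getD f (k+1) k hlt]
  obtain ⟨hE0, hEmono, hEiff⟩ := hE
  have hcb0 : cbf f 0 = false := cbf_zero f hf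
  have hcN : ∀ k, cNf f k ≤ 1 := cNf_le f
  have hcN0 : cNf f 0 = 0 := by simp [cNf, hcb0]
  have hemono : StrictMono (fun k => 2*k - cNf f k) := by
    apply strictMono_nat_of_lt_succ
    intro k
    have := hcN k; have := hcN (k+1)
    show 2*k - cNf f k < 2*(k+1) - cNf f (k+1)
    omega
  have hEe : ∀ k, E k = 2*k - cNf f k := by
    apply mono_range_eq E _ hEmono hemono (by rw [hE0]; simp [hcN0])
    intro m
    rcases Nat.eq_zero_or_pos m with rfl | hm
    · constructor
      · rintro ⟨k, hk1, hk2⟩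
        exfalso
        have := hEmono (show 0 < k from hk1)
        omega
      · rintro ⟨k, hk1, hk2⟩
        exfalso
        have := hcN k
        have hk3 : 2*k - cNf f k = 0 := hk2
        omega
    · rw [hEiff m hm, hpe m hm, hpe (m+1) (by omega)]
      exact run_char f hf m hm
  have hRf : ∀ k, 1 ≤ k → R k + cNf f k = 2 + cNf f (k-1) := by
    intro k hk
    obtain ⟨k', rfl⟩ : ∃ k', k = k'+1 := ⟨k-1, by omega⟩
    have h1 := hR (k'+1)
    have hsub : k'+1-1 = k' := by omega
    rw [hsub] at h1 ⊢
    rw [hEe (k'+1), hEe k'] at h1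
    have := hcN (k'+1); have := hcN k'
    rcases Nat.eq_zero_or_pos k' with rfl | hk'
    · have h00 := hcN0
      omega
    · omega
  obtain ⟨i0, rfl⟩ : ∃ i0, i = i0 + 1 := ⟨i-1, by omega⟩
  have key : ∀ t, t ≤ n → cNf f (i0+t) + cNf f (i0+n) = cNf f (i0+n+t) + cNf f i0 := by
    intro t
    induction t with
    | zero => intro _; simp only [Nat.add_zero]; omega
    | succ t iht =>
      intro ht
      have iht' := iht (by omega)
      have r1 := hRf (i0+1+t) (by omega)
      have r2 := hRf (i0+1+n+t) (by omega)
      rw [show i0+1+t-1 = i0+t by omega] at r1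
      rw [show i0+1+n+t-1 = i0+n+t by omega] at r2
      have hs := hsq t (by omega)
      rw [show i0+(t+1) = i0+1+t by omega, show i0+n+(t+1) = i0+1+n+t by omega]
      omega
  have hAB : cNf f i0 = cNf f (i0+n) := by
    have h1 := key n (le_refl n)
    have := hcN i0; have := hcN (i0+n); have := hcN (i0+n+n)
    omega
  have hper : ∀ t, t ≤ n → cbf f (i0+t) = cbf f (i0+n+t) := by
    intro t ht
    have h1 := key t ht
    have h2 : cNf f (i0+t) = cNf f (i0+n+t) := by omega
    by_cases hx : cbf f (i0+t) <;> by_cases hy : cbf f (i0+n+t) <;>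
      simp [cNf, hx, hy] at h2 ⊢
  have hL := keyL n hn (cbf f) (Ff_cbf f hf) i0 hper
  rcases hL with h1 | ⟨h3, e1, e2, e3⟩
  · subst h1
    left
    refine ⟨rfl, ?_⟩
    have hp0 := hper 0 (by omega)
    rw [show i0 + 0 = i0 by omega, show i0+1+0 = i0+1 by omega] at hp0
    have r1 := hRf (i0+1) (by omega)
    rw [show i0+1-1 = i0 by omega] at r1
    have hcc : cNf f i0 = cNf f (i0+1) := by simp [cNf, hp0]
    omega
  · subst h3
    have r1 := hRf (i0+1) (by omega)
    rw [show i0+1-1 = i0 by omega] at r1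
    have r2 := hRf (i0+2) (by omega)
    rw [show i0+2-1 = i0+1 by omega] at r2
    have r3 := hRf (i0+3) (by omega)
    rw [show i0+3-1 = i0+2 by omega] at r3
    cases hb : cbf f i0 with
    | false =>
      right; left
      have v0 : cNf f i0 = 0 := by simp [cNf, hb]
      have v1 : cNf f (i0+1) = 1 := by simp [cNf, e1, hb]
      have v2 : cNf f (i0+2) = 1 := by simp [cNf, e2, hb]
      have v3 : cNf f (i0+3) = 0 := by simp [cNf, e3, hb]
      refine ⟨rfl, by omega, ?_, ?_⟩
      · rw [show i0+1+1 = i0+2 by omega]; omega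
      · rw [show i0+1+2 = i0+3 by omega]; omega
    | true =>
      right; right
      have v0 : cNf f i0 = 1 := by simp [cNf, hb]
      have v1 : cNf f (i0+1) = 0 := by simp [cNf, e1, hb]
      have v2 : cNf f (i0+2) = 0 := by simp [cNf, e2, hb]
      have v3 : cNf f (i0+3) = 1 := by simp [cNf, e3, hb]
      refine ⟨rfl, by omega, ?_, ?_⟩
      · rw [show i0+1+1 = i0+2 by omega]; omega
      · rw [show i0+1+2 = i0+3 by omega]; omega
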